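/- Let θ, σ ∈ (0,1) and define Ψ(π) = (θ/π)^{1/(1-θ)} for π > 0, and the per-cell total traffic V(π) = N̂ Ψ(π)(1 − Ψ(π)^{1-σ}/((2-σ)Φ_max^{1-σ})) when Ψ(π) ≤ Φ_max. Then V'(π) = −N̂ Ψ(π)/(π(1-θ)) · (1 − Ψ(π)^{1-σ}/Φ_max^{1-σ}) ≤ 0, with strict inequality when Ψ(π) < Φ_max; hence V is nonincreasing in π. -/

import Mathlib

/-- Derivative and monotonicity of the volume-pricing per-cell total traffic
V(π) = N̂Ψ(π)(1 − Ψ(π)^{1-σ}/((2-σ)Φ_max^{1-σ})) with Ψ(π) = (θ/π)^{1/(1-θ)},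
in the regime Ψ(π) ≤ Φ_max. -/
theorem volume_pricing_traffic_deriv
    (θ σ Φmax N : ℝ)
    (hθ0 : 0 < θ) (hθ1 : θ < 1) (hσ0 : 0 < σ) (hσ1 : σ < 1)
    (hΦ : 0 < Φmax) (hN : 0 < N)
    (Ψ V : ℝ → ℝ)
    (hΨ : ∀ π : ℝ, Ψ π = (θ / π) ^ (1 / (1 - θ)))
    (hV : ∀ π : ℝ, V π = N * Ψ π * (1 - (Ψ π) ^ (1 - σ) / ((2 - σ) * Φmax ^ (1 - σ)))) :
    (∀ π : ℝ, 0 < π → Ψ π ≤ Φmax →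
      HasDerivAt V (-(N * Ψ π) / (π * (1 - θ)) * (1 - (Ψ π) ^ (1 - σ) / Φmax ^ (1 - σ))) π ∧
      -(N * Ψ π) / (π * (1 - θ)) * (1 - (Ψ π) ^ (1 - σ) / Φmax ^ (1 - σ)) ≤ 0 ∧
      (Ψ π < Φmax →
        -(N * Ψ π) / (π * (1 - θ)) * (1 - (Ψ π) ^ (1 - σ) / Φmax ^ (1 - σ)) < 0)) ∧
    AntitoneOn V {π : ℝ | 0 < π ∧ Ψ π ≤ Φmax} := by
  have h1θ : (0:ℝ) < 1 - θ := by linarith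
  have h2σ : (0:ℝ) < 2 - σ := by linarith
  have h1σ : (0:ℝ) < 1 - σ := by linarith
  have hΨfun : Ψ = fun π => (θ / π) ^ (1 / (1 - θ)) := funext hΨ
  have hVfun : V = fun π => N * Ψ π * (1 - (Ψ π) ^ (1 - σ) / ((2 - σ) * Φmax ^ (1 - σ))) :=
    funext hV
  have hΨpos : ∀ π : ℝ, 0 < π → 0 < Ψ π := by
    intro π hπ; rw [hΨ]; exact Real.rpow_pos_of_pos (div_pos hθ0 hπ) _
  have hΨanti : ∀ a b : ℝ, 0 < a → a ≤ b → Ψ b ≤ Ψ a := by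
    intro a b ha hab
    rw [hΨ, hΨ]
    have hb : 0 < b := lt_of_lt_of_le ha hab
    apply Real.rpow_le_rpow (le_of_lt (div_pos hθ0 hb)) _ (by positivity)
    gcongr
  have hderivΨ : ∀ π : ℝ, 0 < π → HasDerivAt Ψ (-(Ψ π) / (π * (1 - θ))) π := by
    intro π hπ
    have hπ0 : π ≠ 0 := ne_of_gt hπ
    have h1 : HasDerivAt (fun x : ℝ => θ / x) (θ * (-(π ^ 2)⁻¹)) π := by
      simpa [div_eq_mul_inv] using (hasDerivAt_inv hπ0).const_mul θ
    have hb : (0:ℝ) < θ / π := div_pos hθ0 hπ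
    have h2 := h1.rpow_const (p := 1 / (1 - θ)) (Or.inl (ne_of_gt hb))
    rw [hΨfun]
    convert h2 using 1
    show -((θ / π) ^ (1 / (1 - θ))) / (π * (1 - θ)) = _
    rw [Real.rpow_sub_one (ne_of_gt hb)]
    field_simp
  have hderivV : ∀ π : ℝ, 0 < π →
      HasDerivAt V (-(N * Ψ π) / (π * (1 - θ)) *
        (1 - (Ψ π) ^ (1 - σ) / Φmax ^ (1 - σ))) π := by
    intro π hπ
    have hΨp := hΨpos π hπ
    have h3 := hderivΨ π hπ
    have h4 := h3.rpow_const (p := 1 - σ) (Or.inl (ne_of_gt hΨp))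
    have hA := h3.const_mul N
    have hB := ((h4.div_const ((2 - σ) * Φmax ^ (1 - σ))).const_sub 1)
    have hV' := hA.mul hB
    rw [hVfun]
    convert hV' using 1
    · rfl
    · rfl
    · rfl
    rw [Real.rpow_sub_one (ne_of_gt hΨp)]
    have hΦ' : (0:ℝ) < Φmax ^ (1 - σ) := Real.rpow_pos_of_pos hΦ _
    field_simp
    ring
  have key : ∀ π : ℝ, 0 < π → Ψ π ≤ Φmax →
      HasDerivAt V (-(N * Ψ π) / (π * (1 - θ)) * (1 - (Ψ π) ^ (1 - σ) / Φmax ^ (1 - σ))) π ∧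
      -(N * Ψ π) / (π * (1 - θ)) * (1 - (Ψ π) ^ (1 - σ) / Φmax ^ (1 - σ)) ≤ 0 ∧
      (Ψ π < Φmax →
        -(N * Ψ π) / (π * (1 - θ)) * (1 - (Ψ π) ^ (1 - σ) / Φmax ^ (1 - σ)) < 0) := by
    intro π hπ hle
    have hΨp := hΨpos π hπ
    have hΦ' : (0:ℝ) < Φmax ^ (1 - σ) := Real.rpow_pos_of_pos hΦ _
    have hneg : -(N * Ψ π) / (π * (1 - θ)) < 0 := by
      apply div_neg_of_neg_of_pos
      · nlinarith
      · positivity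
    have hfac : 0 ≤ 1 - (Ψ π) ^ (1 - σ) / Φmax ^ (1 - σ) := by
      have : (Ψ π) ^ (1 - σ) ≤ Φmax ^ (1 - σ) :=
        Real.rpow_le_rpow hΨp.le hle h1σ.le
      have := div_le_one_of_le₀ this hΦ'.le
      linarith
    refine ⟨hderivV π hπ, mul_nonpos_of_nonpos_of_nonneg hneg.le hfac, ?_⟩
    intro hlt
    have hfac' : 0 < 1 - (Ψ π) ^ (1 - σ) / Φmax ^ (1 - σ) := by
      have : (Ψ π) ^ (1 - σ) < Φmax ^ (1 - σ) :=
        Real.rpow_lt_rpow hΨp.le hlt h1σ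
      have := (div_lt_one hΦ').mpr this
      linarith
    exact mul_neg_of_neg_of_pos hneg hfac'
  refine ⟨key, ?_⟩
  have hconv : Convex ℝ {π : ℝ | 0 < π ∧ Ψ π ≤ Φmax} := by
    rw [convex_iff_ordConnected]
    constructor
    intro x hx y hy z hz
    exact ⟨lt_of_lt_of_le hx.1 hz.1, le_trans (hΨanti x z hx.1 hz.1) hx.2⟩
  apply antitoneOn_of_deriv_nonpos hconv
  · intro x hx
    exact (hderivV x hx.1).continuousAt.continuousWithinAt
  · intro x hx
    have hx' := interior_subset hx
    exact (hderivV x hx'.1).differentiableAt.differentiableWithinAt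
  · intro x hx
    have hx' := interior_subset hx
    rw [(hderivV x hx'.1).deriv]
    exact (key x hx'.1 hx'.2).2.1
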